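/- Let X be a compact metric space and f : X → X a continuous map. Let ℛ be a finite collection of repellers of f which contains ∅ and X, and is closed under binary union and binary intersection. Then there exists a map k assigning to each R ∈ ℛ a subset k(R) ⊆ X such that: each k(R) is a repelling neighborhood with Inv⁺(k(R)) = R; k(∅) = ∅ and k(X) = X; and for all R, R' ∈ ℛ, k(R ∪ R') = k(R) ∪ k(R') and k(R ∩ R') = k(R) ∩ k(R'). In particular k is injective. -/

import Mathlib

open Set

/-- The maximal invariant set in `U`: the union of all subsets `S ⊆ U` with `f '' S = S`. -/
def MaxInv {Y : Type*} (f : Y → Y) (U : Set Y) : Set Y :=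
  ⋃₀ {S : Set Y | S ⊆ U ∧ f '' S = S}

/-- The maximal forward invariant set in `U`: the union of all subsets `S ⊆ U`
with `f '' S ⊆ S`. -/
def MaxInvPlus {Y : Type*} (f : Y → Y) (U : Set Y) : Set Y :=
  ⋃₀ {S : Set Y | S ⊆ U ∧ f '' S ⊆ S}

/-- The omega-limit set `ω(U) = ⋂_{n ≥ 0} cl (⋃_{m ≥ n} f^[m] '' U)`. -/
def OmegaLim {Y : Type*} [TopologicalSpace Y] (f : Y → Y) (U : Set Y) : Set Y :=
  ⋂ n : ℕ, closure (⋃ m ≥ n, f^[m] '' U)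

/-- The alpha-limit set `α(U) = ⋂_{n ≥ 0} cl (⋃_{m ≥ n} (f^[m]) ⁻¹' U)`. -/
def AlphaLim {Y : Type*} [TopologicalSpace Y] (f : Y → Y) (U : Set Y) : Set Y :=
  ⋂ n : ℕ, closure (⋃ m ≥ n, f^[m] ⁻¹' U)

/-- A trapping region: a forward invariant set `U` with `f^[n] '' cl U ⊆ int U`
for some `n ≥ 1`. -/
def IsTrappingRegion {Y : Type*} [TopologicalSpace Y] (f : Y → Y) (U : Set Y) : Prop :=
  f '' U ⊆ U ∧ ∃ n : ℕ, 1 ≤ n ∧ f^[n] '' closure U ⊆ interior U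

/-- An attractor: `A = Inv(U)` for some trapping region `U`. -/
def IsAttractor {Y : Type*} [TopologicalSpace Y] (f : Y → Y) (A : Set Y) : Prop :=
  ∃ U : Set Y, IsTrappingRegion f U ∧ A = MaxInv f U

/-- An attracting neighborhood: `ω(U) ⊆ int U`. -/
def IsAttractingNbhd {Y : Type*} [TopologicalSpace Y] (f : Y → Y) (U : Set Y) : Prop :=
  OmegaLim f U ⊆ interior U

/-- A repelling region: a backward invariant set `U` with `(f^[n]) ⁻¹' cl U ⊆ int U`
for some `n ≥ 1`. -/
def IsRepellingRegion {Y : Type*} [TopologicalSpace Y] (f : Y → Y) (U : Set Y) : Prop :=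
  f ⁻¹' U ⊆ U ∧ ∃ n : ℕ, 1 ≤ n ∧ f^[n] ⁻¹' closure U ⊆ interior U

/-- A repeller: `R = Inv⁺(U)` for some repelling region `U`. -/
def IsRepeller {Y : Type*} [TopologicalSpace Y] (f : Y → Y) (R : Set Y) : Prop :=
  ∃ U : Set Y, IsRepellingRegion f U ∧ R = MaxInvPlus f U

/-- A repelling neighborhood: `α(U) ⊆ int U`. -/
def IsRepellingNbhd {Y : Type*} [TopologicalSpace Y] (f : Y → Y) (U : Set Y) : Prop :=
  AlphaLim f U ⊆ interior U

/-- A backward orbit: a sequence `γ : ℕ → Y` with `f (γ (k+1)) = γ k` for all `k`.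
A backward orbit through `x` additionally satisfies `γ 0 = x`. -/
def IsBackwardOrbit {Y : Type*} (f : Y → Y) (γ : ℕ → Y) : Prop :=
  ∀ k : ℕ, f (γ (k + 1)) = γ k

/-- The orbital alpha-limit set `α_o(γ) = ⋂_{n ≥ 0} cl {γ m : m ≥ n}`. -/
def OrbAlpha {Y : Type*} [TopologicalSpace Y] (γ : ℕ → Y) : Set Y :=
  ⋂ n : ℕ, closure (γ '' {m : ℕ | n ≤ m})

/-- The dual repeller of an attractor `A`: `A* = {x : ω(x) ∩ A = ∅}`. -/
def DualRepeller {Y : Type*} [TopologicalSpace Y] (f : Y → Y) (A : Set Y) : Set Y :=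
  {x : Y | OmegaLim f {x} ∩ A = ∅}

/-- The dual attractor of a repeller `R`:
`R* = {x : ∃ backward orbit γ through x with α_o(γ) ∩ R = ∅}`. -/
def DualAttractor {Y : Type*} [TopologicalSpace Y] (f : Y → Y) (R : Set Y) : Set Y :=
  {x : Y | ∃ γ : ℕ → Y, γ 0 = x ∧ IsBackwardOrbit f γ ∧ OrbAlpha γ ∩ R = ∅}
section RepellerAux

variable {Y : Type*}

lemma preim_iterate_add (f : Y → Y) (a b : ℕ) (S : Set Y) :
    f^[a + b] ⁻¹' S = f^[b] ⁻¹' (f^[a] ⁻¹' S) := by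
  rw [Function.iterate_add, Set.preimage_comp]

lemma preim_iter_subset {f : Y → Y} {U : Set Y} (h : f ⁻¹' U ⊆ U) (n : ℕ) :
    f^[n] ⁻¹' U ⊆ U := by
  induction n with
  | zero => simp
  | succ n ih =>
      rw [preim_iterate_add f n 1 U, Function.iterate_one]
      intro x hx
      exact h (ih hx)

lemma preim_anti {f : Y → Y} {U : Set Y} (h : f ⁻¹' U ⊆ U) {m n : ℕ} (hmn : m ≤ n) :
    f^[n] ⁻¹' U ⊆ f^[m] ⁻¹' U := by
  obtain ⟨k, rfl⟩ := Nat.exists_eq_add_of_le hmn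
  rw [Nat.add_comm m k, preim_iterate_add]
  exact Set.preimage_mono (preim_iter_subset h k)

lemma maxInvPlus_eq (f : Y → Y) (U : Set Y) :
    MaxInvPlus f U = ⋂ n : ℕ, f^[n] ⁻¹' U := by
  apply Set.Subset.antisymm
  · rintro x hx
    simp only [MaxInvPlus, Set.mem_sUnion, Set.mem_setOf_eq] at hx
    obtain ⟨S, ⟨hSU, hfS⟩, hxS⟩ := hx
    refine Set.mem_iInter.2 fun n => ?_
    have hS : f^[n] x ∈ S := by
      induction n with
      | zero => simpa using hxS
      | succ n ih =>
          rw [Function.iterate_succ_apply']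
          exact hfS ⟨_, ih, rfl⟩
    exact hSU hS
  · intro x hx
    refine ⟨⋂ n, f^[n] ⁻¹' U, ⟨fun y hy => by simpa using Set.mem_iInter.1 hy 0, ?_⟩, hx⟩
    rintro y ⟨z, hz, rfl⟩
    refine Set.mem_iInter.2 fun n => ?_
    have := Set.mem_iInter.1 hz (n + 1)
    simpa [Function.iterate_succ_apply] using this

lemma maxInvPlus_subset (f : Y → Y) (U : Set Y) : MaxInvPlus f U ⊆ U :=
  Set.sUnion_subset fun _ hS => hS.1

lemma maxInvPlus_mono (f : Y → Y) {U V : Set Y} (h : U ⊆ V) :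
    MaxInvPlus f U ⊆ MaxInvPlus f V := by
  rw [maxInvPlus_eq, maxInvPlus_eq]
  exact Set.iInter_mono fun n => Set.preimage_mono h

variable [TopologicalSpace Y]

lemma alphaLim_empty (f : Y → Y) : AlphaLim f (∅ : Set Y) = ∅ := by
  simp [AlphaLim, Set.iInter_const]

lemma alphaLim_union (f : Y → Y) (U V : Set Y) :
    AlphaLim f (U ∪ V) = AlphaLim f U ∪ AlphaLim f V := by
  have hanti : ∀ (W : Set Y) {n n' : ℕ}, n ≤ n' →
      closure (⋃ m ≥ n', f^[m] ⁻¹' W) ⊆ closure (⋃ m ≥ n, f^[m] ⁻¹' W) := by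
    intro W n n' h
    exact closure_mono (Set.biUnion_subset_biUnion_left fun m hm => le_trans h hm)
  have hA : ∀ n : ℕ, closure (⋃ m ≥ n, f^[m] ⁻¹' (U ∪ V))
      = closure (⋃ m ≥ n, f^[m] ⁻¹' U) ∪ closure (⋃ m ≥ n, f^[m] ⁻¹' V) := by
    intro n
    have he : (⋃ m ≥ n, f^[m] ⁻¹' (U ∪ V))
        = (⋃ m ≥ n, f^[m] ⁻¹' U) ∪ ⋃ m ≥ n, f^[m] ⁻¹' V := by
      ext x
      constructor
      · intro hx
        rcases Set.mem_iUnion₂.1 hx with ⟨m, hm, hx⟩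
        rcases hx with h | h
        · exact Or.inl (Set.mem_biUnion hm h)
        · exact Or.inr (Set.mem_biUnion hm h)
      · rintro (hx | hx)
        · rcases Set.mem_iUnion₂.1 hx with ⟨m, hm, h⟩
          exact Set.mem_biUnion hm (Or.inl h)
        · rcases Set.mem_iUnion₂.1 hx with ⟨m, hm, h⟩
          exact Set.mem_biUnion hm (Or.inr h)
    rw [he, closure_union]
  unfold AlphaLim
  ext x
  simp only [Set.mem_iInter, hA, Set.mem_union]
  constructor
  · intro h
    by_contra hc
    push_neg at hc
    obtain ⟨⟨n1, h1⟩, ⟨n2, h2⟩⟩ := hc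
    rcases h (max n1 n2) with h' | h'
    · exact h1 (hanti U (le_max_left n1 n2) h')
    · exact h2 (hanti V (le_max_right n1 n2) h')
  · rintro (h | h) n
    · exact Or.inl (h n)
    · exact Or.inr (h n)

lemma maxInvPlus_subset_alphaLim (f : Y → Y) (U : Set Y) :
    MaxInvPlus f U ⊆ AlphaLim f U := by
  rw [maxInvPlus_eq]
  intro x hx
  refine Set.mem_iInter.2 fun n => subset_closure ?_
  exact Set.mem_biUnion (le_refl n) (Set.mem_iInter.1 hx n)

lemma alphaLim_eq_iInter {f : Y → Y} {U : Set Y} (h1 : f ⁻¹' U ⊆ U) :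
    AlphaLim f U = ⋂ n : ℕ, closure (f^[n] ⁻¹' U) := by
  unfold AlphaLim
  apply Set.iInter_congr
  intro n
  have he : (⋃ m ≥ n, f^[m] ⁻¹' U) = f^[n] ⁻¹' U := Set.Subset.antisymm
    (Set.iUnion₂_subset fun m hm => preim_anti h1 hm)
    (fun x hx => Set.mem_biUnion (le_refl n) hx)
  rw [he]

lemma closure_preim_iter_subset {f : Y → Y} (hf : Continuous f) (n : ℕ) (S : Set Y) :
    closure (f^[n] ⁻¹' S) ⊆ f^[n] ⁻¹' closure S :=
  closure_minimal (Set.preimage_mono subset_closure) (isClosed_closure.preimage (hf.iterate n))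

lemma IsRepellingRegion.iInter_subset {f : Y → Y} {U : Set Y}
    (hU : IsRepellingRegion f U) :
    (⋂ n : ℕ, f^[n] ⁻¹' closure U) ⊆ MaxInvPlus f U := by
  obtain ⟨h1, n₀, hn₀, hrep⟩ := hU
  rw [maxInvPlus_eq]
  intro x hx
  refine Set.mem_iInter.2 fun k => ?_
  have hx' : x ∈ f^[n₀ + k] ⁻¹' closure U := Set.mem_iInter.1 hx _
  rw [preim_iterate_add] at hx'
  exact Set.preimage_mono (hrep.trans interior_subset) hx'

lemma IsRepellingRegion.alphaLim_eq {f : Y → Y} (hf : Continuous f) {U : Set Y}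
    (hU : IsRepellingRegion f U) : AlphaLim f U = MaxInvPlus f U := by
  apply Set.Subset.antisymm
  · rw [alphaLim_eq_iInter hU.1]
    intro x hx
    apply hU.iInter_subset
    exact Set.mem_iInter.2 fun n =>
      closure_preim_iter_subset hf n U (Set.mem_iInter.1 hx n)
  · exact maxInvPlus_subset_alphaLim f U

lemma IsRepellingRegion.alphaLim_subset_interior {f : Y → Y} (hf : Continuous f) {U : Set Y}
    (hU : IsRepellingRegion f U) : AlphaLim f U ⊆ interior U := by
  obtain ⟨h1, n₀, hn₀, hrep⟩ := id hU
  rw [alphaLim_eq_iInter hU.1]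
  intro x hx
  exact hrep (closure_preim_iter_subset hf n₀ U (Set.mem_iInter.1 hx n₀))

lemma IsRepellingRegion.maxInvPlus_subset_interior {f : Y → Y} (hf : Continuous f) {U : Set Y}
    (hU : IsRepellingRegion f U) : MaxInvPlus f U ⊆ interior U := by
  rw [← hU.alphaLim_eq hf]
  exact hU.alphaLim_subset_interior hf

lemma IsRepellingRegion.isClosed_maxInvPlus {f : Y → Y} (hf : Continuous f) {U : Set Y}
    (hU : IsRepellingRegion f U) : IsClosed (MaxInvPlus f U) := by
  rw [← hU.alphaLim_eq hf]
  exact isClosed_iInter fun n => isClosed_closure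

lemma preim_iter_cl_sub_int {f : Y → Y} (hf : Continuous f) {W : Set Y}
    (h1 : f ⁻¹' W ⊆ W) {n N : ℕ} (hn : n ≤ N) (h2 : f^[n] ⁻¹' closure W ⊆ interior W)
    {Z : Set Y} (hWZ : W ⊆ Z) : f^[N] ⁻¹' closure W ⊆ interior Z := by
  obtain ⟨k, rfl⟩ := Nat.exists_eq_add_of_le hn
  rw [preim_iterate_add]
  calc f^[k] ⁻¹' (f^[n] ⁻¹' closure W) ⊆ f^[k] ⁻¹' (interior W) := Set.preimage_mono h2
    _ ⊆ interior Z := interior_maximal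
        (((Set.preimage_mono interior_subset).trans (preim_iter_subset h1 k)).trans hWZ)
        (isOpen_interior.preimage (hf.iterate k))

lemma isRepellingRegion_empty (f : Y → Y) : IsRepellingRegion f (∅ : Set Y) :=
  ⟨by simp, 1, le_refl 1, by simp⟩

lemma IsRepellingRegion.union {f : Y → Y} (hf : Continuous f) {U V : Set Y}
    (hU : IsRepellingRegion f U) (hV : IsRepellingRegion f V) :
    IsRepellingRegion f (U ∪ V) := by
  obtain ⟨hU1, n₁, hn₁, hU2⟩ := hU
  obtain ⟨hV1, n₂, hn₂, hV2⟩ := hV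
  refine ⟨?_, max n₁ n₂, le_trans hn₁ (le_max_left _ _), ?_⟩
  · rw [Set.preimage_union]
    exact Set.union_subset_union hU1 hV1
  · rw [closure_union, Set.preimage_union]
    apply Set.union_subset
    · exact preim_iter_cl_sub_int hf hU1 (le_max_left n₁ n₂) hU2 Set.subset_union_left
    · exact preim_iter_cl_sub_int hf hV1 (le_max_right n₁ n₂) hV2 Set.subset_union_right

lemma IsRepellingRegion.inter {f : Y → Y} (hf : Continuous f) {U V : Set Y}
    (hU : IsRepellingRegion f U) (hV : IsRepellingRegion f V) :
    IsRepellingRegion f (U ∩ V) := by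
  obtain ⟨hU1, n₁, hn₁, hU2⟩ := hU
  obtain ⟨hV1, n₂, hn₂, hV2⟩ := hV
  refine ⟨?_, max n₁ n₂, le_trans hn₁ (le_max_left _ _), ?_⟩
  · rw [Set.preimage_inter]
    exact Set.inter_subset_inter hU1 hV1
  · rw [interior_inter]
    intro x hx
    constructor
    · exact preim_iter_cl_sub_int hf hU1 (le_max_left n₁ n₂) hU2 (Set.Subset.refl U)
        (Set.preimage_mono (closure_mono Set.inter_subset_left) hx)
    · exact preim_iter_cl_sub_int hf hV1 (le_max_right n₁ n₂) hV2 (Set.Subset.refl V)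
        (Set.preimage_mono (closure_mono Set.inter_subset_right) hx)

lemma isRepellingRegion_biUnion {ι : Type*} {f : Y → Y} (hf : Continuous f) {N : ι → Set Y}
    {s : Set ι} (hs : s.Finite) :
    (∀ i ∈ s, IsRepellingRegion f (N i)) → IsRepellingRegion f (⋃ i ∈ s, N i) := by
  refine Set.Finite.induction_on
    (motive := fun s _ => (∀ i ∈ s, IsRepellingRegion f (N i)) →
      IsRepellingRegion f (⋃ i ∈ s, N i)) s hs (fun _ => ?_) ?_
  · simpa using isRepellingRegion_empty f
  · intro a t _ _ ih h
    rw [Set.biUnion_insert]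
    exact (h a (Set.mem_insert _ _)).union hf (ih fun i hi => h i (Set.mem_insert_of_mem _ hi))

lemma alphaLim_biUnion {ι : Type*} (f : Y → Y) {N : ι → Set Y}
    {s : Set ι} (hs : s.Finite) :
    AlphaLim f (⋃ i ∈ s, N i) = ⋃ i ∈ s, AlphaLim f (N i) := by
  refine Set.Finite.induction_on
    (motive := fun s _ => AlphaLim f (⋃ i ∈ s, N i) = ⋃ i ∈ s, AlphaLim f (N i)) s hs ?_ ?_
  · simp [alphaLim_empty]
  · intro a t _ _ ih
    rw [Set.biUnion_insert, Set.biUnion_insert, alphaLim_union, ih]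

lemma maxInvPlus_biUnion {ι : Type*} {f : Y → Y} (hf : Continuous f) {N : ι → Set Y}
    {s : Set ι} (hs : s.Finite) (h : ∀ i ∈ s, IsRepellingRegion f (N i)) :
    MaxInvPlus f (⋃ i ∈ s, N i) = ⋃ i ∈ s, MaxInvPlus f (N i) := by
  apply Set.Subset.antisymm
  · refine (maxInvPlus_subset_alphaLim f _).trans ?_
    rw [alphaLim_biUnion f hs]
    exact Set.iUnion₂_mono fun i hi => ((h i hi).alphaLim_eq hf).le
  · exact Set.iUnion₂_subset fun i hi => maxInvPlus_mono f (Set.subset_biUnion_of_mem hi)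

lemma IsRepellingRegion.shrink [CompactSpace Y] {f : Y → Y} (hf : Continuous f) {U : Set Y}
    (hU : IsRepellingRegion f U) {W : Set Y} (hW : IsOpen W) (hRW : MaxInvPlus f U ⊆ W) :
    ∃ V : Set Y, IsRepellingRegion f V ∧ MaxInvPlus f V = MaxInvPlus f U ∧ closure V ⊆ W := by
  obtain ⟨h1, n₀, hn₀, h2⟩ := id hU
  have hC : ∃ k : ℕ, f^[n₀ * k] ⁻¹' closure U ⊆ W := by
    by_contra hc
    push_neg at hc
    set D : ℕ → Set Y := fun k => (f^[n₀ * k] ⁻¹' closure U) ∩ Wᶜ with hD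
    have hstep : ∀ k, f^[n₀ * (k + 1)] ⁻¹' closure U ⊆ f^[n₀ * k] ⁻¹' closure U := by
      intro k
      rw [show n₀ * (k + 1) = n₀ + n₀ * k by ring, preim_iterate_add]
      exact Set.preimage_mono (h2.trans (interior_subset.trans subset_closure))
    have hDd : ∀ k, D (k + 1) ⊆ D k := fun k => Set.inter_subset_inter_left _ (hstep k)
    have hDne : ∀ k, (D k).Nonempty := by
      intro k
      rcases Set.not_subset.1 (hc k) with ⟨x, hx1, hx2⟩
      exact ⟨x, hx1, hx2⟩
    have hDcl : ∀ k, IsClosed (D k) :=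
      fun k => (isClosed_closure.preimage (hf.iterate _)).inter hW.isClosed_compl
    obtain ⟨x, hx⟩ := IsCompact.nonempty_iInter_of_sequence_nonempty_isCompact_isClosed
      D hDd hDne (hDcl 0).isCompact hDcl
    have hxW : x ∉ W := (Set.mem_iInter.1 hx 0).2
    apply hxW
    apply hRW
    rw [maxInvPlus_eq]
    refine Set.mem_iInter.2 fun m => ?_
    have hm : x ∈ f^[n₀ * (m + 1)] ⁻¹' closure U := (Set.mem_iInter.1 hx (m + 1)).1
    have : x ∈ f^[n₀ * m] ⁻¹' U := by
      rw [show n₀ * (m + 1) = n₀ + n₀ * m by ring, preim_iterate_add] at hm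
      exact Set.preimage_mono (h2.trans interior_subset) hm
    exact preim_anti h1 (Nat.le_mul_of_pos_left m hn₀) this
  obtain ⟨k, hk⟩ := hC
  set m := n₀ * k with hm
  refine ⟨f^[m] ⁻¹' U, ⟨?_, n₀, hn₀, ?_⟩, ?_, ?_⟩
  · have e1 : f ⁻¹' (f^[m] ⁻¹' U) = f^[m + 1] ⁻¹' U := by
      rw [preim_iterate_add f m 1 U, Function.iterate_one]
    have e2 : f^[m] ⁻¹' (f ⁻¹' U) = f^[1 + m] ⁻¹' U := by
      rw [preim_iterate_add f 1 m U, Function.iterate_one]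
    rw [e1, Nat.add_comm m 1, ← e2]
    exact Set.preimage_mono h1
  · intro x hx
    have hx1 : x ∈ f^[n₀] ⁻¹' (f^[m] ⁻¹' closure U) :=
      Set.preimage_mono (closure_preim_iter_subset hf m U) hx
    rw [← preim_iterate_add, Nat.add_comm m n₀, preim_iterate_add] at hx1
    have hx2 : x ∈ f^[m] ⁻¹' (interior U) := Set.preimage_mono h2 hx1
    exact interior_maximal (Set.preimage_mono interior_subset)
      (isOpen_interior.preimage (hf.iterate m)) hx2
  · rw [maxInvPlus_eq, maxInvPlus_eq]
    apply Set.Subset.antisymm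
    · intro x hx
      refine Set.mem_iInter.2 fun n => ?_
      have := Set.mem_iInter.1 hx n
      rw [← preim_iterate_add] at this
      exact preim_anti h1 (Nat.le_add_left n m) this
    · intro x hx
      refine Set.mem_iInter.2 fun n => ?_
      rw [← preim_iterate_add]
      exact Set.mem_iInter.1 hx (m + n)
  · exact (closure_preim_iter_subset hf m U).trans hk

end RepellerAux

section LatticePart

variable {X : Type*}

def JoinIrr (ℛ : Set (Set X)) (J : Set X) : Prop :=
  J ∈ ℛ ∧ J ≠ ∅ ∧ ∀ A ∈ ℛ, ∀ B ∈ ℛ, A ∪ B = J → A = J ∨ B = J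

lemma joinIrr_decomp (ℛ : Set (Set X)) (hfin : ℛ.Finite) :
    ∀ R ∈ ℛ, R = ⋃ J ∈ {J : Set X | JoinIrr ℛ J ∧ J ⊆ R}, J := by
  by_contra hc
  push_neg at hc
  obtain ⟨R₀, hR₀, hne₀⟩ := hc
  have hBadne : {R ∈ ℛ | R ≠ ⋃ J ∈ {J : Set X | JoinIrr ℛ J ∧ J ⊆ R}, J}.Nonempty :=
    ⟨R₀, hR₀, hne₀⟩
  obtain ⟨R, hRBad, hmin⟩ := Set.Finite.exists_minimalFor id _
    (hfin.subset (Set.sep_subset _ _)) hBadne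
  obtain ⟨hRℛ, hRne⟩ := hRBad
  have hsub : (⋃ J ∈ {J : Set X | JoinIrr ℛ J ∧ J ⊆ R}, J) ⊆ R :=
    Set.iUnion₂_subset fun J hJ => hJ.2
  have hnsub : ¬ R ⊆ ⋃ J ∈ {J : Set X | JoinIrr ℛ J ∧ J ⊆ R}, J :=
    fun hc' => hRne (Set.Subset.antisymm hc' hsub)
  rcases eq_or_ne R ∅ with rfl | hR0
  · exact hnsub (Set.empty_subset _)
  by_cases hJR : JoinIrr ℛ R
  · exact hnsub (Set.subset_biUnion_of_mem (u := fun J => J) ⟨hJR, Set.Subset.rfl⟩)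
  have hex : ∃ A ∈ ℛ, ∃ B ∈ ℛ, A ∪ B = R ∧ A ≠ R ∧ B ≠ R := by
    by_contra hc'
    push_neg at hc'
    refine hJR ⟨hRℛ, hR0, fun A hA B hB hAB => ?_⟩
    by_cases h : A = R
    · exact Or.inl h
    · exact Or.inr (hc' A hA B hB hAB h)
  obtain ⟨A, hA, B, hB, hAB, hAne, hBne⟩ := hex
  have hAR : A ⊆ R := hAB ▸ Set.subset_union_left
  have hBR : B ⊆ R := hAB ▸ Set.subset_union_right
  have hkey : ∀ C, C ∈ ℛ → C ⊆ R → C ≠ R →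
      C ⊆ ⋃ J ∈ {J : Set X | JoinIrr ℛ J ∧ J ⊆ R}, J := by
    intro C hC hCR hCne
    have hCgood : C = ⋃ J ∈ {J : Set X | JoinIrr ℛ J ∧ J ⊆ C}, J := by
      by_contra hc'
      exact hCne (Set.Subset.antisymm hCR (hmin (j := C) ⟨hC, hc'⟩ hCR))
    calc C = ⋃ J ∈ {J : Set X | JoinIrr ℛ J ∧ J ⊆ C}, J := hCgood
      _ ⊆ ⋃ J ∈ {J : Set X | JoinIrr ℛ J ∧ J ⊆ R}, J :=
        Set.biUnion_subset_biUnion_left fun J hJ => ⟨hJ.1, hJ.2.trans hCR⟩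
  apply hnsub
  conv_lhs => rw [← hAB]
  exact Set.union_subset (hkey A hA hAR hAne) (hkey B hB hBR hBne)

lemma joinIrr_split {ℛ : Set (Set X)} (hinf : ∀ R ∈ ℛ, ∀ R' ∈ ℛ, R ∩ R' ∈ ℛ)
    {J : Set X} (hJ : JoinIrr ℛ J) {R R' : Set X} (hR : R ∈ ℛ) (hR' : R' ∈ ℛ)
    (h : J ⊆ R ∪ R') : J ⊆ R ∨ J ⊆ R' := by
  have hA : J ∩ R ∈ ℛ := hinf J hJ.1 R hR
  have hB : J ∩ R' ∈ ℛ := hinf J hJ.1 R' hR'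
  have hU : (J ∩ R) ∪ (J ∩ R') = J := by
    rw [← Set.inter_union_distrib_left]
    exact Set.inter_eq_left.2 h
  rcases hJ.2.2 _ hA _ hB hU with h' | h'
  · exact Or.inl (Set.inter_eq_left.1 h')
  · exact Or.inr (Set.inter_eq_left.1 h')

lemma repeller_closed {Y : Type*} [TopologicalSpace Y] {f : Y → Y} (hf : Continuous f)
    {R : Set Y} (h : IsRepeller f R) : IsClosed R := by
  obtain ⟨U, hU, rfl⟩ := h
  exact hU.isClosed_maxInvPlus hf

lemma main_rec {X : Type*} [MetricSpace X] [CompactSpace X]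
    (f : X → X) (hf : Continuous f)
    (ℛ : Set (Set X)) (hfin : ℛ.Finite)
    (hrep : ∀ R ∈ ℛ, IsRepeller f R)
    (hinf : ∀ R ∈ ℛ, ∀ R' ∈ ℛ, R ∩ R' ∈ ℛ) :
    ∀ (n : ℕ) (T : Set (Set X)), T.ncard = n → (∀ J ∈ T, JoinIrr ℛ J) →
    (∀ J ∈ T, ∀ J' : Set X, JoinIrr ℛ J' → J' ⊆ J → J' ∈ T) →
    ∃ N : Set X → Set X,
      (∀ J ∈ T, IsRepellingRegion f (N J) ∧ MaxInvPlus f (N J) = J) ∧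
      (∀ J ∈ T, ∀ J' ∈ T, ¬J ⊆ J' → ¬J' ⊆ J →
        N J ∩ N J' ⊆ ⋃ S ∈ {S : Set X | S ∈ T ∧ S ⊆ J ∩ J'}, interior (N S)) ∧
      (∀ R ∈ ℛ, ∀ J ∈ T, ¬J ⊆ R →
        R ∩ closure (N J) ⊆ ⋃ S ∈ {S : Set X | S ∈ T ∧ S ⊆ R ∩ J}, interior (N S)) := by
  intro n
  induction n using Nat.strong_induction_on with
  | _ n ih =>
  intro T hTcard hT𝒥 hTdc
  rcases T.eq_empty_or_nonempty with rfl | hTne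
  · exact ⟨fun _ => ∅, by simp, by simp, by simp⟩
  have hTfin : T.Finite := hfin.subset fun J hJ => (hT𝒥 J hJ).1
  obtain ⟨J₀, hJ₀T, hJ₀max⟩ := Set.Finite.exists_maximalFor id T hTfin hTne
  have hJ₀𝒥 : JoinIrr ℛ J₀ := hT𝒥 J₀ hJ₀T
  have hJ₀ℛ : J₀ ∈ ℛ := hJ₀𝒥.1
  set T' : Set (Set X) := T \ {J₀} with hT'def
  have hT'T : T' ⊆ T := Set.diff_subset
  have hT'ne : ∀ J ∈ T', J ≠ J₀ := fun J hJ h => hJ.2 (by simp [h])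
  have hT'card : T'.ncard < n := hTcard ▸ Set.ncard_diff_singleton_lt_of_mem hJ₀T hTfin
  have hT'dc : ∀ J ∈ T', ∀ J' : Set X, JoinIrr ℛ J' → J' ⊆ J → J' ∈ T' := by
    intro J hJ J' hJ'𝒥 hsub
    have hJ'T : J' ∈ T := hTdc J (hT'T hJ) J' hJ'𝒥 hsub
    refine ⟨hJ'T, ?_⟩
    simp only [Set.mem_singleton_iff]
    intro h
    subst h
    exact hT'ne J hJ (Set.Subset.antisymm (hJ₀max (j := J) (hT'T hJ) hsub) hsub)
  obtain ⟨N₀, hN₀a, hN₀b, hN₀c⟩ := ih T'.ncard hT'card T' rfl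
    (fun J hJ => hT𝒥 J (hT'T hJ)) hT'dc
  classical
  have hJint : ∀ J ∈ T', J ⊆ interior (N₀ J) := by
    intro J hJ
    have h := hN₀a J hJ
    have h2 := h.1.maxInvPlus_subset_interior hf
    rw [h.2] at h2
    exact h2
  have hGopen : ∀ S : Set X,
      IsOpen (⋃ S' ∈ {S' : Set X | S' ∈ T' ∧ S' ⊆ S}, interior (N₀ S')) :=
    fun S => isOpen_biUnion fun _ _ => isOpen_interior
  have hSG : ∀ S ∈ ℛ, S ⊆ J₀ → ¬ J₀ ⊆ S →
      S ⊆ ⋃ S' ∈ {S' : Set X | S' ∈ T' ∧ S' ⊆ S}, interior (N₀ S') := by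
    intro S hS hSJ₀ hns x hx
    rw [joinIrr_decomp ℛ hfin S hS] at hx
    rcases Set.mem_iUnion₂.1 hx with ⟨J, hJ, hxJ⟩
    have hJT : J ∈ T := hTdc J₀ hJ₀T J hJ.1 (hJ.2.trans hSJ₀)
    have hJT' : J ∈ T' := by
      refine ⟨hJT, ?_⟩
      simp only [Set.mem_singleton_iff]
      intro h
      subst h
      exact hns hJ.2
    exact Set.mem_biUnion ⟨hJT', hJ.2⟩ (hJint J hJT' hxJ)
  set B1 : Set X := ⋃ R ∈ {R : Set X | R ∈ ℛ ∧ ¬ J₀ ⊆ R},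
    (R \ ⋃ S' ∈ {S' : Set X | S' ∈ T' ∧ S' ⊆ R ∩ J₀}, interior (N₀ S')) with hB1def
  set B2 : Set X := ⋃ J' ∈ {J' : Set X | J' ∈ T' ∧ ¬ J' ⊆ J₀ ∧ ¬ J₀ ⊆ J'},
    (closure (N₀ J') \ ⋃ S' ∈ {S' : Set X | S' ∈ T' ∧ S' ⊆ J₀ ∩ J'}, interior (N₀ S'))
    with hB2def
  have hB1closed : IsClosed B1 := by
    apply Set.Finite.isClosed_biUnion (hfin.subset fun R hR => hR.1)
    intro R hR
    exact (repeller_closed hf (hrep R hR.1)).sdiff (hGopen _)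
  have hB2closed : IsClosed B2 := by
    apply Set.Finite.isClosed_biUnion ((hTfin.subset hT'T).subset fun J hJ => hJ.1)
    intro J hJ
    exact isClosed_closure.sdiff (hGopen _)
  have hJ₀W : J₀ ⊆ (B1 ∪ B2)ᶜ := by
    intro x hx
    simp only [Set.mem_compl_iff, Set.mem_union]
    push_neg
    constructor
    · intro hxB1
      rcases Set.mem_iUnion₂.1 hxB1 with ⟨R, hR, hxR⟩
      have hmem : x ∈ R ∩ J₀ := ⟨hxR.1, hx⟩
      have hGsub : R ∩ J₀ ⊆ ⋃ S' ∈ {S' : Set X | S' ∈ T' ∧ S' ⊆ R ∩ J₀}, interior (N₀ S') := by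
        apply hSG _ (hinf R hR.1 J₀ hJ₀ℛ) Set.inter_subset_right
        intro hcon
        exact hR.2 ((Set.subset_inter_iff.1 hcon).1)
      exact hxR.2 (hGsub hmem)
    · intro hxB2
      rcases Set.mem_iUnion₂.1 hxB2 with ⟨J', hJ', hxJ'⟩
      have hc := hN₀c J₀ hJ₀ℛ J' hJ'.1 hJ'.2.1
      exact hxJ'.2 (hc ⟨hx, hxJ'.1⟩)
  have hWopen : IsOpen (B1 ∪ B2)ᶜ := (hB1closed.union hB2closed).isOpen_compl
  obtain ⟨U₀, hU₀, hJ₀U₀⟩ := hrep J₀ hJ₀ℛ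
  obtain ⟨V, hV, hVmax, hVcl⟩ := hU₀.shrink hf hWopen (by rw [← hJ₀U₀]; exact hJ₀W)
  rw [← hJ₀U₀] at hVmax
  set N : Set X → Set X := fun S => if S = J₀ then V else N₀ S with hNdef
  have hNJ₀ : N J₀ = V := by simp [hNdef]
  have hNold : ∀ J ∈ T', N J = N₀ J := by
    intro J hJ
    simp [hNdef, hT'ne J hJ]
  have hTsplit : ∀ J ∈ T, J = J₀ ∨ J ∈ T' := by
    intro J hJ
    by_cases h : J = J₀
    · exact Or.inl h
    · exact Or.inr ⟨hJ, by simpa using h⟩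
  have hGlift : ∀ (S₁ S₂ : Set X), S₁ ⊆ S₂ →
      (⋃ S' ∈ {S' : Set X | S' ∈ T' ∧ S' ⊆ S₁}, interior (N₀ S')) ⊆
      ⋃ S ∈ {S : Set X | S ∈ T ∧ S ⊆ S₂}, interior (N S) := by
    intro S₁ S₂ h12 x hx
    rcases Set.mem_iUnion₂.1 hx with ⟨S, hS, hxS⟩
    refine Set.mem_biUnion ⟨hT'T hS.1, hS.2.trans h12⟩ ?_
    rwa [hNold S hS.1]
  have hkeyB : ∀ J' ∈ T', ¬J' ⊆ J₀ → ¬J₀ ⊆ J' →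
      N J₀ ∩ N J' ⊆ ⋃ S ∈ {S : Set X | S ∈ T ∧ S ⊆ J₀ ∩ J'}, interior (N S) := by
    intro J' hJ'T' h1 h2
    rw [hNJ₀, hNold J' hJ'T']
    intro x hx
    have hxW : x ∈ (B1 ∪ B2)ᶜ := hVcl (subset_closure hx.1)
    have hxG : x ∈ ⋃ S' ∈ {S' : Set X | S' ∈ T' ∧ S' ⊆ J₀ ∩ J'}, interior (N₀ S') := by
      by_contra hxn
      exact hxW (Or.inr (Set.mem_biUnion ⟨hJ'T', h1, h2⟩ ⟨subset_closure hx.2, hxn⟩))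
    exact hGlift (J₀ ∩ J') (J₀ ∩ J') (Set.Subset.refl _) hxG
  refine ⟨N, ?_, ?_, ?_⟩
  · intro J hJ
    rcases hTsplit J hJ with hJeq | hJ'
    · subst hJeq
      rw [hNJ₀]
      exact ⟨hV, hVmax⟩
    · rw [hNold J hJ']
      exact hN₀a J hJ'
  · intro J hJ J' hJ'mem hJJ' hJ'J
    rcases hTsplit J hJ with hJeq | hJT'
    · subst hJeq
      rcases hTsplit J' hJ'mem with hJ'eq | hJ'T'
      · subst hJ'eq
        exact absurd (Set.Subset.refl _) hJJ'
      · exact hkeyB J' hJ'T' hJ'J hJJ'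
    · rcases hTsplit J' hJ'mem with hJ'eq | hJ'T'
      · subst hJ'eq
        intro x hx
        have hx' := hkeyB J hJT' hJJ' hJ'J ⟨hx.2, hx.1⟩
        rcases Set.mem_iUnion₂.1 hx' with ⟨S, hS, hxS⟩
        exact Set.mem_biUnion ⟨hS.1, fun y hy => And.intro (hS.2 hy).2 (hS.2 hy).1⟩ hxS
      · rw [hNold J hJT', hNold J' hJ'T']
        intro x hx
        exact hGlift _ _ (Set.Subset.refl _) (hN₀b J hJT' J' hJ'T' hJJ' hJ'J hx)
  · intro R hR J hJ hJR
    rcases hTsplit J hJ with hJeq | hJT'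
    · subst hJeq
      rw [hNJ₀]
      intro x hx
      have hxW : x ∈ (B1 ∪ B2)ᶜ := hVcl hx.2
      have hxG : x ∈ ⋃ S' ∈ {S' : Set X | S' ∈ T' ∧ S' ⊆ R ∩ J}, interior (N₀ S') := by
        by_contra hxn
        exact hxW (Or.inl (Set.mem_biUnion ⟨hR, hJR⟩ ⟨hx.1, hxn⟩))
      exact hGlift _ _ (Set.Subset.refl _) hxG
    · rw [hNold J hJT']
      intro x hx
      exact hGlift _ _ (Set.Subset.refl _) (hN₀c R hR J hJT' hJR hx)

end LatticePart

/-- A finite sublattice of repellers lifts to a lattice of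
repelling neighborhoods. -/
theorem finite_repeller_lattice_lifts
    {X : Type*} [MetricSpace X] [CompactSpace X]
    (f : X → X) (hf : Continuous f)
    (ℛ : Set (Set X)) (hfin : ℛ.Finite)
    (hrep : ∀ R ∈ ℛ, IsRepeller f R)
    (hbot : (∅ : Set X) ∈ ℛ) (htop : (Set.univ : Set X) ∈ ℛ)
    (hsup : ∀ R ∈ ℛ, ∀ R' ∈ ℛ, R ∪ R' ∈ ℛ)
    (hinf : ∀ R ∈ ℛ, ∀ R' ∈ ℛ, R ∩ R' ∈ ℛ) :
    ∃ k : Set X → Set X,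
      (∀ R ∈ ℛ, IsRepellingNbhd f (k R) ∧ MaxInvPlus f (k R) = R) ∧
      k ∅ = ∅ ∧ k Set.univ = Set.univ ∧
      (∀ R ∈ ℛ, ∀ R' ∈ ℛ, k (R ∪ R') = k R ∪ k R') ∧
      (∀ R ∈ ℛ, ∀ R' ∈ ℛ, k (R ∩ R') = k R ∩ k R') ∧
      (∀ R ∈ ℛ, ∀ R' ∈ ℛ, k R = k R' → R = R') := by
  classical
  obtain ⟨N, hNa, hNb, hNc⟩ := main_rec f hf ℛ hfin hrep hinf
    {J : Set X | JoinIrr ℛ J}.ncard {J : Set X | JoinIrr ℛ J} rfl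
    (fun J hJ => hJ) (fun J _ J' hJ' _ => hJ')
  have hidxfin : ∀ R : Set X, {J : Set X | JoinIrr ℛ J ∧ J ⊆ R}.Finite :=
    fun R => hfin.subset fun J hJ => hJ.1.1
  set k : Set X → Set X := fun R => ⋃ J ∈ {J : Set X | JoinIrr ℛ J ∧ J ⊆ R}, N J with hkdef
  have hkeq : ∀ S : Set X, k S = ⋃ J ∈ {J : Set X | JoinIrr ℛ J ∧ J ⊆ S}, N J := fun S => rfl
  have hkrr : ∀ R : Set X, IsRepellingRegion f (k R) :=
    fun R => isRepellingRegion_biUnion hf (hidxfin R) fun J hJ => (hNa J hJ.1).1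
  have hkmax : ∀ R ∈ ℛ, MaxInvPlus f (k R) = R := by
    intro R hR
    rw [hkeq]
    rw [maxInvPlus_biUnion hf (hidxfin R) (fun J hJ => (hNa J hJ.1).1)]
    apply Set.Subset.antisymm
    · apply Set.iUnion₂_subset
      intro J hJ
      rw [(hNa J hJ.1).2]
      exact hJ.2
    · intro x hx
      rw [joinIrr_decomp ℛ hfin R hR] at hx
      rcases Set.mem_iUnion₂.1 hx with ⟨J, hJ, hxJ⟩
      refine Set.mem_biUnion hJ ?_
      rw [(hNa J hJ.1).2]
      exact hxJ
  refine ⟨k, ?_, ?_, ?_, ?_, ?_, ?_⟩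
  · intro R hR
    exact ⟨(hkrr R).alphaLim_subset_interior hf, hkmax R hR⟩
  · have hempty : {J : Set X | JoinIrr ℛ J ∧ J ⊆ (∅ : Set X)} = ∅ := by
      ext J
      simp only [Set.mem_setOf_eq, Set.mem_empty_iff_false, iff_false, not_and]
      intro hJ hsub
      exact hJ.2.1 (Set.subset_empty_iff.1 hsub)
    rw [hkeq, hempty]
    simp
  · apply Set.Subset.antisymm (Set.subset_univ _)
    calc (Set.univ : Set X) = ⋃ J ∈ {J : Set X | JoinIrr ℛ J ∧ J ⊆ Set.univ}, J :=
          joinIrr_decomp ℛ hfin Set.univ htop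
      _ ⊆ k Set.univ := by
          rw [hkeq]
          refine Set.iUnion₂_mono fun J hJ => ?_
          conv_lhs => rw [← (hNa J hJ.1).2]
          exact maxInvPlus_subset f (N J)
  · intro R hR R' hR'
    have hidx : {J : Set X | JoinIrr ℛ J ∧ J ⊆ R ∪ R'}
        = {J : Set X | JoinIrr ℛ J ∧ J ⊆ R} ∪ {J : Set X | JoinIrr ℛ J ∧ J ⊆ R'} := by
      ext J
      simp only [Set.mem_setOf_eq, Set.mem_union]
      constructor
      · rintro ⟨hJ, hsub⟩
        rcases joinIrr_split hinf hJ hR hR' hsub with h | h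
        · exact Or.inl ⟨hJ, h⟩
        · exact Or.inr ⟨hJ, h⟩
      · rintro (⟨hJ, h⟩ | ⟨hJ, h⟩)
        · exact ⟨hJ, h.trans Set.subset_union_left⟩
        · exact ⟨hJ, h.trans Set.subset_union_right⟩
    rw [hkeq, hkeq, hkeq, hidx, Set.biUnion_union]
  · intro R hR R' hR'
    rw [hkeq, hkeq, hkeq]
    apply Set.Subset.antisymm
    · exact Set.subset_inter
        (Set.biUnion_subset_biUnion_left fun J hJ => ⟨hJ.1, hJ.2.trans Set.inter_subset_left⟩)
        (Set.biUnion_subset_biUnion_left fun J hJ => ⟨hJ.1, hJ.2.trans Set.inter_subset_right⟩)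
    · intro x hx
      obtain ⟨hx1, hx2⟩ := hx
      rcases Set.mem_iUnion₂.1 hx1 with ⟨J, hJ, hxJ⟩
      rcases Set.mem_iUnion₂.1 hx2 with ⟨J', hJ', hxJ'⟩
      by_cases h1 : J ⊆ J'
      · exact Set.mem_biUnion ⟨hJ.1, Set.subset_inter hJ.2 (h1.trans hJ'.2)⟩ hxJ
      by_cases h2 : J' ⊆ J
      · exact Set.mem_biUnion ⟨hJ'.1, Set.subset_inter (h2.trans hJ.2) hJ'.2⟩ hxJ'
      · have hmem := hNb J hJ.1 J' hJ'.1 h1 h2 ⟨hxJ, hxJ'⟩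
        rcases Set.mem_iUnion₂.1 hmem with ⟨S, hS, hxS⟩
        refine Set.mem_biUnion ⟨hS.1, ?_⟩ (interior_subset hxS)
        exact hS.2.trans (Set.inter_subset_inter hJ.2 hJ'.2)
  · intro R hR R' hR' h
    rw [← hkmax R hR, ← hkmax R' hR', h]
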